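/- Let Ω ⊂ ℝ² be a bounded measurable set, let θ : ℝ² → ℝ² be a compactly supported C¹ vector field, and let w, v : ℝ² × ℝ → ℝ be C² functions with compact support. Then the function t ↦ ∫_{T_t(Ω)} ∇_x w(x,t) · ∇_x v(x,t) dx is differentiable at t = 0 with derivative ∫_Ω [ (div θ)(x) ∇w(x,0)·∇v(x,0) − ∇w(x,0) · S(θ)(x) ∇v(x,0) + ∇ẇ(x)·∇v(x,0) + ∇v̇(x)·∇w(x,0) ] dx, where ẇ, v̇ are the material derivatives and ∇ẇ, ∇v̇ are their spatial gradients. -/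

import Mathlib

open MeasureTheory InnerProductSpace ContinuousLinearMap

noncomputable section ShapeAux

local notation "E2" => EuclideanSpace ℝ (Fin 2)

lemma matdet2 (t : ℝ) (A : Matrix (Fin 2) (Fin 2) ℝ) :
    (1 + t • A).det = 1 + t * A.trace + t ^ 2 * A.det := by
  simp [Matrix.det_fin_two, Matrix.trace_fin_two, Matrix.one_apply]
  ring

lemma det2 (t : ℝ) (A : E2 →L[ℝ] E2) :
    ContinuousLinearMap.det ((1 : E2 →L[ℝ] E2) + t • A) =
      1 + t * LinearMap.trace ℝ E2 A.toLinearMap + t ^ 2 * LinearMap.det A.toLinearMap := by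
  classical
  set b := (EuclideanSpace.basisFun (Fin 2) ℝ).toBasis
  have h1 : ContinuousLinearMap.det ((1 : E2 →L[ℝ] E2) + t • A)
      = LinearMap.det ((1 : E2 →ₗ[ℝ] E2) + t • A.toLinearMap) := by
    simp [ContinuousLinearMap.det]
  rw [h1, ← LinearMap.det_toMatrix b, ← LinearMap.det_toMatrix b,
    LinearMap.trace_eq_matrix_trace ℝ b]
  rw [map_add, _root_.map_smul, LinearMap.toMatrix_one]
  exact matdet2 t _

lemma detzero2 : LinearMap.det (0 : E2 →ₗ[ℝ] E2) = 0 := by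
  classical
  rw [← LinearMap.det_toMatrix (EuclideanSpace.basisFun (Fin 2) ℝ).toBasis, map_zero]
  simp [Matrix.det_fin_two]
local notation "⟪" x ", " y "⟫" => @inner ℝ _ _ x y

/-- The continuous linear map sending a functional `L` on `E2 × ℝ` to the vector representing
`x ↦ L (x, 0)`. -/
def AppL : ((E2 × ℝ) →L[ℝ] ℝ) →ₗ[ℝ] E2 where
  toFun L := (toDual ℝ E2).symm (L.comp (ContinuousLinearMap.inl ℝ E2 ℝ))
  map_add' L M := by simp [ContinuousLinearMap.add_comp]
  map_smul' c L := by
    simp [ContinuousLinearMap.smul_comp, LinearIsometryEquiv.map_smulₛₗ, starRingEnd_apply]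

/-- The continuous linear map sending a functional `L` on `E2 × ℝ` to the vector representing
`x ↦ L (x, 0)`. -/
def App : ((E2 × ℝ) →L[ℝ] ℝ) →L[ℝ] E2 := AppL.toContinuousLinearMap

lemma App_apply (L : (E2 × ℝ) →L[ℝ] ℝ) :
    App L = (toDual ℝ E2).symm (L.comp (ContinuousLinearMap.inl ℝ E2 ℝ)) := rfl

lemma inner_App (L : (E2 × ℝ) →L[ℝ] ℝ) (u : E2) : ⟪App L, u⟫ = L (u, 0) := by
  rw [App_apply, toDual_symm_apply]
  rfl

lemma hasFDerivAt_section (f : E2 × ℝ → ℝ) (hf : Differentiable ℝ f) (t : ℝ) (x : E2) :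
    HasFDerivAt (fun z : E2 => f (z, t))
      ((fderiv ℝ f (x, t)).comp (ContinuousLinearMap.inl ℝ E2 ℝ)) x :=
  (hf (x, t)).hasFDerivAt.comp x (hasFDerivAt_prodMk_left x t)

lemma gradient_section (f : E2 × ℝ → ℝ) (hf : Differentiable ℝ f) (t : ℝ) (x : E2) :
    gradient (fun z : E2 => f (z, t)) x = App (fderiv ℝ f (x, t)) := by
  rw [gradient, (hasFDerivAt_section f hf t x).fderiv, App_apply]

lemma contDiff_App_fderiv {f : E2 × ℝ → ℝ} (hf : ContDiff ℝ 2 f) :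
    ContDiff ℝ 1 (fun p => App (fderiv ℝ f p)) :=
  App.contDiff.comp (hf.fderiv_right (le_refl 2))

lemma hcs_App_fderiv {f : E2 × ℝ → ℝ} (hfc : HasCompactSupport f) :
    HasCompactSupport (fun p => App (fderiv ℝ f p)) :=
  (hfc.fderiv ℝ).comp_left (g := App) (map_zero App)

lemma key_sym {f : E2 × ℝ → ℝ} (hf : ContDiff ℝ 2 f)
    {θ : E2 → E2} (hθ : ContDiff ℝ 1 θ) (y u : E2) :
    ⟪fderiv ℝ (fun p => App (fderiv ℝ f p)) (y, 0) (θ y, 1), u⟫ =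
      ⟪gradient (fun z => (fderiv ℝ f (z, (0:ℝ))) (θ z, (1:ℝ))) y, u⟫
        - fderiv ℝ f (y, (0:ℝ)) ((fderiv ℝ θ y) u, 0) := by
  have hf1 : ContDiff ℝ 1 (fderiv ℝ f) := hf.fderiv_right (le_refl 2)
  set f'' := fderiv ℝ (fderiv ℝ f) (y, (0:ℝ)) with hf''def
  -- derivative of p ↦ App (fderiv f p)
  have h1 : HasFDerivAt (fun p => App (fderiv ℝ f p)) (App.comp f'') (y, 0) :=
    App.hasFDerivAt.comp (y, (0:ℝ)) ((hf1.differentiable one_ne_zero (y, 0)).hasFDerivAt)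
  rw [h1.fderiv]
  have h2 : ⟪App (f'' (θ y, 1)), u⟫ = f'' (θ y, 1) (u, 0) := inner_App _ u
  -- second derivative symmetry
  have hsym : f'' (θ y, 1) (u, 0) = f'' (u, 0) (θ y, 1) :=
    (hf.contDiffAt.isSymmSndFDerivAt (by simp)) _ _
  -- derivative of the material derivative
  have hc : HasFDerivAt (fun z : E2 => fderiv ℝ f (z, (0:ℝ)))
      (f''.comp (ContinuousLinearMap.inl ℝ E2 ℝ)) y :=
    ((hf1.differentiable one_ne_zero (y, 0)).hasFDerivAt).comp y (hasFDerivAt_prodMk_left y 0)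
  have hu : HasFDerivAt (fun z : E2 => (θ z, (1:ℝ)))
      ((fderiv ℝ θ y).prod 0) y :=
    ((hθ.differentiable one_ne_zero y).hasFDerivAt).prodMk (hasFDerivAt_const 1 y)
  have h3 : HasFDerivAt (fun z : E2 => (fderiv ℝ f (z, (0:ℝ))) (θ z, (1:ℝ)))
      ((fderiv ℝ f (y, (0:ℝ))).comp ((fderiv ℝ θ y).prod 0)
        + (f''.comp (ContinuousLinearMap.inl ℝ E2 ℝ)).flip (θ y, 1)) y :=
    hc.clm_apply hu
  have h4 : ⟪gradient (fun z => (fderiv ℝ f (z, (0:ℝ))) (θ z, (1:ℝ))) y, u⟫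
      = fderiv ℝ (fun z => (fderiv ℝ f (z, (0:ℝ))) (θ z, (1:ℝ))) y u := by
    rw [gradient, toDual_symm_apply]
  rw [h4, h3.fderiv]
  simp only [ContinuousLinearMap.comp_apply, ContinuousLinearMap.coe_comp',
    ContinuousLinearMap.add_apply, ContinuousLinearMap.flip_apply,
    ContinuousLinearMap.prod_apply, ContinuousLinearMap.zero_apply,
    ContinuousLinearMap.inl_apply, Function.comp_apply] at *
  rw [h2, hsym]
  ring


lemma integrand_id {w v : E2 × ℝ → ℝ} (hw : ContDiff ℝ 2 w) (hv : ContDiff ℝ 2 v)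
    {θ : E2 → E2} (hθ : ContDiff ℝ 1 θ) (y : E2) :
    fderiv ℝ (fun p => ⟪App (fderiv ℝ w p), App (fderiv ℝ v p)⟫) (y, (0:ℝ)) (θ y, 1)
      + ⟪App (fderiv ℝ w (y, 0)), App (fderiv ℝ v (y, 0))⟫ *
          LinearMap.trace ℝ E2 (fderiv ℝ θ y).toLinearMap
    = (LinearMap.trace ℝ E2 (fderiv ℝ θ y).toLinearMap) *
          ⟪App (fderiv ℝ w (y, 0)), App (fderiv ℝ v (y, 0))⟫
      - ⟪App (fderiv ℝ w (y, 0)), (fderiv ℝ θ y) (App (fderiv ℝ v (y, 0)))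
            + (ContinuousLinearMap.adjoint (fderiv ℝ θ y)) (App (fderiv ℝ v (y, 0)))⟫
      + ⟪gradient (fun z => (fderiv ℝ w (z, (0:ℝ))) (θ z, (1:ℝ))) y, App (fderiv ℝ v (y, 0))⟫
      + ⟪gradient (fun z => (fderiv ℝ v (z, (0:ℝ))) (θ z, (1:ℝ))) y, App (fderiv ℝ w (y, 0))⟫ := by
  set Gw : E2 := App (fderiv ℝ w (y, 0))
  set Gv : E2 := App (fderiv ℝ v (y, 0))
  have hGwd : DifferentiableAt ℝ (fun p => App (fderiv ℝ w p)) (y, (0:ℝ)) :=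
    (contDiff_App_fderiv hw).differentiable one_ne_zero _
  have hGvd : DifferentiableAt ℝ (fun p => App (fderiv ℝ v p)) (y, (0:ℝ)) :=
    (contDiff_App_fderiv hv).differentiable one_ne_zero _
  rw [fderiv_inner_apply ℝ hGwd hGvd]
  have kw := key_sym hw hθ y Gv
  have kv := key_sym hv hθ y Gw
  have ew : fderiv ℝ w (y, (0:ℝ)) ((fderiv ℝ θ y) Gv, 0) = ⟪Gw, (fderiv ℝ θ y) Gv⟫ :=
    (inner_App _ _).symm
  have ev : fderiv ℝ v (y, (0:ℝ)) ((fderiv ℝ θ y) Gw, 0) = ⟪Gv, (fderiv ℝ θ y) Gw⟫ :=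
    (inner_App _ _).symm
  have hadj : ⟪Gw, (ContinuousLinearMap.adjoint (fderiv ℝ θ y)) Gv⟫
      = ⟪Gv, (fderiv ℝ θ y) Gw⟫ := by
    rw [ContinuousLinearMap.adjoint_inner_right]
    exact real_inner_comm _ _
  have hcomm : ⟪Gw, fderiv ℝ (fun p => App (fderiv ℝ v p)) (y, 0) (θ y, 1)⟫
      = ⟪fderiv ℝ (fun p => App (fderiv ℝ v p)) (y, 0) (θ y, 1), Gw⟫ := real_inner_comm _ _
  rw [hcomm, kw, kv, inner_add_right, hadj, ew, ev]
  ring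


lemma arith_bounds {t ε A B : ℝ} {Ca Cb : ℝ} (ht : |t| ≤ ε) (hA : |A| ≤ Ca) (hB : |B| ≤ Cb)
    (hε0 : 0 ≤ ε) (hε1 : ε ≤ 1) (hε2 : ε * (Ca + Cb + 1) ≤ 1 / 2) :
    1 / 2 ≤ 1 + t * A + t ^ 2 * B ∧ |1 + t * A + t ^ 2 * B| ≤ 1 + Ca + Cb := by
  have h1 : |t * A| ≤ ε * Ca := by
    rw [abs_mul]
    exact mul_le_mul ht hA (abs_nonneg A) hε0
  have htle : |t| ^ 2 ≤ ε := by
    nlinarith [abs_nonneg t]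
  have h2 : |t ^ 2 * B| ≤ ε * Cb := by
    rw [abs_mul, abs_pow]
    exact mul_le_mul htle hB (abs_nonneg B) hε0
  have hCa : 0 ≤ Ca := le_trans (abs_nonneg A) hA
  have hCb : 0 ≤ Cb := le_trans (abs_nonneg B) hB
  constructor
  · nlinarith [neg_abs_le (t * A), neg_abs_le (t ^ 2 * B)]
  · have := abs_add_le (1 + t * A) (t ^ 2 * B)
    have := abs_add_le (1 : ℝ) (t * A)
    have h3 : ε * Ca ≤ Ca := by nlinarith
    have h4 : ε * Cb ≤ Cb := by nlinarith
    simp only [abs_one] at *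
    nlinarith

set_option maxHeartbeats 1000000 in
theorem shape_derivative_dirichlet_energy
    (Ω : Set (EuclideanSpace ℝ (Fin 2)))
    (hΩm : MeasurableSet Ω) (hΩb : Bornology.IsBounded Ω)
    (θ : EuclideanSpace ℝ (Fin 2) → EuclideanSpace ℝ (Fin 2))
    (hθ : ContDiff ℝ 1 θ) (hθc : HasCompactSupport θ)
    (w v : EuclideanSpace ℝ (Fin 2) × ℝ → ℝ)
    (hw : ContDiff ℝ 2 w) (hwc : HasCompactSupport w)
    (hv : ContDiff ℝ 2 v) (hvc : HasCompactSupport v) :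
    HasDerivAt
      (fun t : ℝ => ∫ x in (fun y => y + t • θ y) '' Ω,
        (inner ℝ (gradient (fun z => w (z, t)) x) (gradient (fun z => v (z, t)) x) : ℝ))
      (∫ x in Ω,
        ((LinearMap.trace ℝ (EuclideanSpace ℝ (Fin 2)) (fderiv ℝ θ x).toLinearMap) *
            (inner ℝ (gradient (fun z => w (z, (0 : ℝ))) x)
              (gradient (fun z => v (z, (0 : ℝ))) x) : ℝ)
          - (inner ℝ (gradient (fun z => w (z, (0 : ℝ))) x)
              ((fderiv ℝ θ x) (gradient (fun z => v (z, (0 : ℝ))) x) +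
                (ContinuousLinearMap.adjoint (fderiv ℝ θ x))
                  (gradient (fun z => v (z, (0 : ℝ))) x)) : ℝ)
          + (inner ℝ (gradient (fun z => (fderiv ℝ w (z, (0 : ℝ))) (θ z, (1 : ℝ))) x)
              (gradient (fun z => v (z, (0 : ℝ))) x) : ℝ)
          + (inner ℝ (gradient (fun z => (fderiv ℝ v (z, (0 : ℝ))) (θ z, (1 : ℝ))) x)
              (gradient (fun z => w (z, (0 : ℝ))) x) : ℝ)))
      0 := by
  classical
  have hwd : Differentiable ℝ w := hw.differentiable two_ne_zero
  have hvd : Differentiable ℝ v := hv.differentiable two_ne_zero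
  have hθd : Differentiable ℝ θ := hθ.differentiable one_ne_zero
  simp only [gradient_section w hwd, gradient_section v hvd]
  -- the integrand as a function of (x, t)
  set g : EuclideanSpace ℝ (Fin 2) × ℝ → ℝ :=
    fun p => ⟪App (fderiv ℝ w p), App (fderiv ℝ v p)⟫ with hgdef
  have hfun2 : ∀ t : ℝ, ∀ x : EuclideanSpace ℝ (Fin 2),
      (inner ℝ (App (fderiv ℝ w (x, t))) (App (fderiv ℝ v (x, t))) : ℝ) = g (x, t) :=
    fun t x => rfl
  simp only [hfun2]
  -- basic regularity of g
  have hgC : ContDiff ℝ 1 g := (contDiff_App_fderiv hw).inner ℝ (contDiff_App_fderiv hv)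
  have hgcont : Continuous g := hgC.continuous
  have hg'cont : Continuous (fderiv ℝ g) := hgC.continuous_fderiv one_ne_zero
  have hgcs : HasCompactSupport g := by
    apply (hcs_App_fderiv hwc).mono'
    refine Set.Subset.trans ?_ (subset_tsupport _)
    intro p hp
    simp only [Function.mem_support] at hp ⊢
    intro h0
    refine hp ?_
    simp only [hgdef]
    rw [h0]
    exact inner_zero_left _
  have hg'cs : HasCompactSupport (fderiv ℝ g) := hgcs.fderiv ℝ
  -- the coefficient functions
  set a : EuclideanSpace ℝ (Fin 2) → ℝ :=
    fun y => LinearMap.trace ℝ (EuclideanSpace ℝ (Fin 2)) (fderiv ℝ θ y).toLinearMap with hadef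
  set b : EuclideanSpace ℝ (Fin 2) → ℝ :=
    fun y => ContinuousLinearMap.det (fderiv ℝ θ y) with hbdef
  have traceLcont : Continuous fun A : EuclideanSpace ℝ (Fin 2) →L[ℝ] EuclideanSpace ℝ (Fin 2) =>
      LinearMap.trace ℝ (EuclideanSpace ℝ (Fin 2)) A.toLinearMap := by
    exact LinearMap.continuous_of_finiteDimensional
      ((LinearMap.trace ℝ (EuclideanSpace ℝ (Fin 2))).comp (ContinuousLinearMap.coeLM ℝ))
  have hconta : Continuous a := traceLcont.comp (hθ.continuous_fderiv one_ne_zero)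
  have hcontb : Continuous b :=
    ContinuousLinearMap.continuous_det.comp (hθ.continuous_fderiv one_ne_zero)
  have hacs : HasCompactSupport a := by
    apply (hθc.fderiv ℝ).mono'
    intro y hy
    by_contra hmem
    have h0 : fderiv ℝ θ y = 0 := image_eq_zero_of_notMem_tsupport hmem
    exact hy (by simp [hadef, h0])
  have hbcs : HasCompactSupport b := by
    apply (hθc.fderiv ℝ).mono'
    intro y hy
    by_contra hmem
    have h0 : fderiv ℝ θ y = 0 := image_eq_zero_of_notMem_tsupport hmem
    exact hy (by simp [hbdef, h0, ContinuousLinearMap.det, detzero2])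
  -- bounds
  obtain ⟨Cg, hCg⟩ := hgcs.exists_bound_of_continuous hgcont
  obtain ⟨Cg', hCg'⟩ := hg'cs.exists_bound_of_continuous hg'cont
  obtain ⟨Cθ, hCθ⟩ := hθc.exists_bound_of_continuous hθ.continuous
  obtain ⟨Ca, hCa⟩ := hacs.exists_bound_of_continuous hconta
  obtain ⟨Cb, hCb⟩ := hbcs.exists_bound_of_continuous hcontb
  have hCg0 : 0 ≤ Cg := le_trans (norm_nonneg _) (hCg 0)
  have hCg'0 : 0 ≤ Cg' := le_trans (norm_nonneg _) (hCg' 0)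
  have hCθ0 : 0 ≤ Cθ := le_trans (norm_nonneg _) (hCθ 0)
  have hCa0 : 0 ≤ Ca := le_trans (norm_nonneg _) (hCa 0)
  have hCb0 : 0 ≤ Cb := le_trans (norm_nonneg _) (hCb 0)
  simp only [Real.norm_eq_abs] at hCa hCb hCg
  -- Lipschitz constant and ε
  obtain ⟨K, hK⟩ := hθ.lipschitzWith_of_hasCompactSupport hθc one_ne_zero
  set Kr : ℝ := (K : ℝ) with hKrdef
  have hKr0 : 0 ≤ Kr := K.coe_nonneg
  set ε : ℝ := min 1 (min ((1 : ℝ) / (2 * (Kr + 1))) ((1 / 2) / (Ca + Cb + 1))) with hεdef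
  have hε0 : 0 < ε := by
    apply lt_min one_pos
    apply lt_min
    · positivity
    · positivity
  have hε1 : ε ≤ 1 := min_le_left _ _
  have hεK : ε * Kr ≤ 1 / 2 := by
    have h1 : ε ≤ 1 / (2 * (Kr + 1)) := le_trans (min_le_right _ _) (min_le_left _ _)
    have h2 : ε * (2 * (Kr + 1)) ≤ 1 := by
      rw [← le_div_iff₀ (by positivity)]
      exact h1
    nlinarith
  have hε2 : ε * (Ca + Cb + 1) ≤ 1 / 2 := by
    have h1 : ε ≤ (1 / 2) / (Ca + Cb + 1) := le_trans (min_le_right _ _) (min_le_right _ _)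
    rw [← le_div_iff₀ (by positivity)]
    exact h1
  -- deformation determinant
  set d : ℝ → EuclideanSpace ℝ (Fin 2) → ℝ :=
    fun t y => 1 + t * a y + t ^ 2 * b y with hddef
  have hdets : ∀ (t : ℝ) (y : EuclideanSpace ℝ (Fin 2)),
      ContinuousLinearMap.det ((1 : EuclideanSpace ℝ (Fin 2) →L[ℝ] EuclideanSpace ℝ (Fin 2))
        + t • fderiv ℝ θ y) = d t y := fun t y => det2 t (fderiv ℝ θ y)
  have hdlb : ∀ t : ℝ, |t| ≤ ε → ∀ y, 1 / 2 ≤ d t y := fun t ht y =>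
    (arith_bounds ht (hCa y) (hCb y) hε0.le hε1 hε2).1
  have hdub : ∀ t : ℝ, |t| ≤ ε → ∀ y, |d t y| ≤ 1 + Ca + Cb := fun t ht y =>
    (arith_bounds ht (hCa y) (hCb y) hε0.le hε1 hε2).2
  -- the deformation and its derivative
  have hT' : ∀ (t : ℝ) (y : EuclideanSpace ℝ (Fin 2)),
      HasFDerivAt (fun y => y + t • θ y)
        ((1 : EuclideanSpace ℝ (Fin 2) →L[ℝ] EuclideanSpace ℝ (Fin 2))
          + t • fderiv ℝ θ y) y := by
    intro t y
    rw [ContinuousLinearMap.one_def]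
    exact (hasFDerivAt_id y).add (((hθd y).hasFDerivAt).const_smul t)
  -- injectivity
  have hinj : ∀ t : ℝ, |t| ≤ ε → Function.Injective (fun y => y + t • θ y) := by
    intro t ht y z h
    simp only at h
    have h0 : y - z = t • (θ z - θ y) := by
      rw [smul_sub]
      have h1 : y + t • θ y - (t • θ y + t • θ z) = z + t • θ z - (t • θ y + t • θ z) := by
        rw [h]
      abel_nf at h1 ⊢
      linear_combination (norm := abel) h1
    have h2 : ‖y - z‖ = |t| * ‖θ z - θ y‖ := by
      rw [h0, norm_smul, Real.norm_eq_abs]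
    have h3 : ‖θ z - θ y‖ ≤ Kr * ‖y - z‖ := by
      have := hK.dist_le_mul z y
      rw [dist_eq_norm, dist_eq_norm] at this
      calc ‖θ z - θ y‖ ≤ Kr * ‖z - y‖ := this
        _ = Kr * ‖y - z‖ := by rw [norm_sub_rev]
    have h4 : ‖y - z‖ ≤ ε * (Kr * ‖y - z‖) := by
      calc ‖y - z‖ = |t| * ‖θ z - θ y‖ := h2
        _ ≤ ε * (Kr * ‖y - z‖) := mul_le_mul ht h3 (norm_nonneg _) hε0.le
    have h5 : ‖y - z‖ = 0 := by
      have h6 : ε * (Kr * ‖y - z‖) ≤ 1 / 2 * ‖y - z‖ := by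
        rw [← mul_assoc]
        exact mul_le_mul_of_nonneg_right hεK (norm_nonneg _)
      have h7 := norm_nonneg (y - z)
      linarith
    have := sub_eq_zero.mp (norm_eq_zero.mp h5)
    exact this
  -- the transformed integrand
  set F : ℝ → EuclideanSpace ℝ (Fin 2) → ℝ :=
    fun t y => d t y * g (y + t • θ y, t) with hFdef
  set F' : ℝ → EuclideanSpace ℝ (Fin 2) → ℝ :=
    fun t y => (a y + 2 * t * b y) * g (y + t • θ y, t)
      + d t y * (fderiv ℝ g (y + t • θ y, t) (θ y, 1)) with hF'def
  -- change of variables: eventual equality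
  have hEq : ∀ t : ℝ, |t| ≤ ε →
      (∫ x in (fun y => y + t • θ y) '' Ω, g (x, t)) = ∫ y in Ω, F t y := by
    intro t ht
    rw [integral_image_eq_integral_abs_det_fderiv_smul volume hΩm
      (fun y _ => (hT' t y).hasFDerivWithinAt) ((hinj t ht).injOn) (fun x => g (x, t))]
    apply integral_congr_ae (Filter.Eventually.of_forall ?_)
    intro y
    rw [hdets t y, abs_of_pos (lt_of_lt_of_le (by norm_num) (hdlb t ht y)), smul_eq_mul]
  -- curves are continuous
  have hcurve : ∀ t : ℝ, Continuous fun y : EuclideanSpace ℝ (Fin 2) => (y + t • θ y, t) :=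
    fun t => by have := hθ.continuous; fun_prop
  have hFcont : ∀ t : ℝ, Continuous (F t) := by
    intro t
    exact ((continuous_const.add (continuous_const.mul hconta)).add
      (continuous_const.mul hcontb)).mul (hgcont.comp (hcurve t))
  have hΩfin : volume Ω < ⊤ := hΩb.measure_lt_top
  -- the dominated-derivative theorem
  set B : ℝ := (Ca + 2 * Cb) * Cg + (1 + Ca + Cb) * (Cg' * (Cθ + 1)) with hBdef
  have key := hasDerivAt_integral_of_dominated_loc_of_deriv_le (F := F) (F' := F')
    (x₀ := (0 : ℝ)) (s := Metric.ball 0 ε) (μ := volume.restrict Ω) (bound := fun _ => B) (Metric.ball_mem_nhds 0 hε0)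
    (Filter.Eventually.of_forall fun t => ((hFcont t).aestronglyMeasurable))
    ?hFint ?hF'meas ?hbound ?hboundint ?hdiff
  case hFint =>
    apply Integrable.mono' (g := fun _ => (1 + Ca + Cb) * Cg)
      (integrableOn_const hΩfin.ne) ((hFcont 0).aestronglyMeasurable)
    apply Filter.Eventually.of_forall
    intro y
    rw [Real.norm_eq_abs, hFdef]
    simp only
    rw [abs_mul]
    exact mul_le_mul (hdub 0 (by simpa using hε0.le) y) (hCg _) (abs_nonneg _)
      (by linarith)
  case hF'meas =>
    apply Continuous.aestronglyMeasurable
    apply Continuous.add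
    · exact ((hconta.add ((continuous_const.mul continuous_const).mul hcontb))).mul
        (hgcont.comp (hcurve 0))
    · apply Continuous.mul
      · exact (continuous_const.add (continuous_const.mul hconta)).add
          (continuous_const.mul hcontb)
      · exact isBoundedBilinearMap_apply.continuous.comp
          ((hg'cont.comp (hcurve 0)).prodMk
            (hθ.continuous.prodMk continuous_const))
  case hbound =>
    apply Filter.Eventually.of_forall
    intro y t htball
    have ht : |t| ≤ ε := by
      rw [Metric.mem_ball, Real.dist_eq, sub_zero] at htball
      exact htball.le
    rw [Real.norm_eq_abs, hF'def]
    simp only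
    have h1 : |(a y + 2 * t * b y) * g (y + t • θ y, t)| ≤ (Ca + 2 * Cb) * Cg := by
      rw [abs_mul]
      apply mul_le_mul _ (hCg _) (abs_nonneg _) (by linarith)
      calc |a y + 2 * t * b y| ≤ |a y| + |2 * t * b y| := abs_add_le _ _
        _ ≤ Ca + 2 * Cb := by
            have : |2 * t * b y| = 2 * |t| * |b y| := by
              rw [abs_mul, abs_mul]
              norm_num
            rw [this]
            have := hCb y
            have := hCa y
            nlinarith [abs_nonneg (b y), abs_nonneg t]
    have h2 : |d t y * (fderiv ℝ g (y + t • θ y, t) (θ y, 1))| ≤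
        (1 + Ca + Cb) * (Cg' * (Cθ + 1)) := by
      rw [abs_mul]
      apply mul_le_mul (hdub t ht y) _ (abs_nonneg _) (by linarith)
      calc |(fderiv ℝ g (y + t • θ y, t)) (θ y, 1)| ≤
          ‖fderiv ℝ g (y + t • θ y, t)‖ * ‖((θ y, (1:ℝ)) : EuclideanSpace ℝ (Fin 2) × ℝ)‖ :=
            (fderiv ℝ g (y + t • θ y, t)).le_opNorm _
        _ ≤ Cg' * (Cθ + 1) := by
            apply mul_le_mul (hCg' _) _ (norm_nonneg _) hCg'0
            rw [Prod.norm_def]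
            apply max_le
            · exact (hCθ (y : EuclideanSpace ℝ (Fin 2))).trans (by linarith)
            · simp only [norm_one]
              linarith
    calc |(a y + 2 * t * b y) * g (y + t • θ y, t)
          + d t y * (fderiv ℝ g (y + t • θ y, t) (θ y, 1))| ≤ _ := abs_add_le _ _
      _ ≤ B := by rw [hBdef]; exact add_le_add h1 h2
  case hboundint => exact integrableOn_const hΩfin.ne
  case hdiff =>
    apply Filter.Eventually.of_forall
    intro y t _
    have hd1 : HasDerivAt (fun t : ℝ => d t y) (a y + 2 * t * b y) t := by
      have h1 : HasDerivAt (fun t : ℝ => t * a y) (a y) t := hasDerivAt_mul_const (a y)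
      have h2 : HasDerivAt (fun t : ℝ => t ^ 2 * b y) (2 * t * b y) t := by
        have := (hasDerivAt_pow 2 t).mul_const (b y)
        simpa using this
      exact (h1.const_add (1 : ℝ)).add h2
    have hcur : HasDerivAt (fun t : ℝ => (y + t • θ y, t)) ((θ y, (1 : ℝ))) t := by
      apply HasDerivAt.prodMk
      · have : HasDerivAt (fun t : ℝ => t • θ y) ((1 : ℝ) • θ y) t :=
          (hasDerivAt_id t).smul_const (θ y)
        simpa using this.const_add y
      · exact hasDerivAt_id t
    have hgd : HasDerivAt (fun t : ℝ => g (y + t • θ y, t))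
        (fderiv ℝ g (y + t • θ y, t) (θ y, 1)) t :=
      ((hgC.differentiable one_ne_zero _).hasFDerivAt).comp_hasDerivAt t hcur
    exact hd1.mul hgd
  -- conclude
  have hev : (fun t : ℝ => ∫ x in (fun y => y + t • θ y) '' Ω, g (x, t))
      =ᶠ[nhds (0 : ℝ)] fun t => ∫ y in Ω, F t y := by
    rw [Filter.eventuallyEq_iff_exists_mem]
    exact ⟨Metric.ball 0 ε, Metric.ball_mem_nhds 0 hε0, fun t htball => by
      rw [Metric.mem_ball, Real.dist_eq, sub_zero] at htball
      exact hEq t htball.le⟩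
  have hfinal := (key.2).congr_of_eventuallyEq hev
  have hID : (∫ y in Ω, F' 0 y) = ∫ x in Ω,
      (LinearMap.trace ℝ (EuclideanSpace ℝ (Fin 2)) (fderiv ℝ θ x).toLinearMap *
          (inner ℝ (App (fderiv ℝ w (x, 0))) (App (fderiv ℝ v (x, 0))) : ℝ)
        - (inner ℝ (App (fderiv ℝ w (x, 0))) ((fderiv ℝ θ x) (App (fderiv ℝ v (x, 0))) +
            (ContinuousLinearMap.adjoint (fderiv ℝ θ x)) (App (fderiv ℝ v (x, 0)))) : ℝ)
        + (inner ℝ (gradient (fun z => (fderiv ℝ w (z, (0 : ℝ))) (θ z, (1 : ℝ))) x)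
            (App (fderiv ℝ v (x, 0))) : ℝ)
        + (inner ℝ (gradient (fun z => (fderiv ℝ v (z, (0 : ℝ))) (θ z, (1 : ℝ))) x)
            (App (fderiv ℝ w (x, 0))) : ℝ)) := by
    apply integral_congr_ae (Filter.Eventually.of_forall ?_)
    intro y
    have hy := integrand_id hw hv hθ y
    rw [hF'def]
    simp only [hddef, hadef, hbdef, hgdef, zero_smul, add_zero, mul_zero, zero_mul,
      one_mul, zero_add, pow_two]
    linarith [hy]
  rw [← hID]
  exact hfinal

end ShapeAux
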